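/- There exists a constant C > 0 depending only on α and A₀ such that the following holds. Let h : ℕ → [0,∞) be a nonnegative multiplicative function belonging to C_w(α). Then for every x ≥ 16, ∑_{n≤x} h(n) ≤ C (x/log x)(log log x) ∑_{n≤x} h(n)/n + C (x/log x)(log log x)^α. -/

import Mathlib

open Complex Finset MeasureTheory Filter Topology LSeries
open scoped LSeries.notation

/-- The von Mangoldt function. -/
noncomputable def vM (n : ℕ) : ℝ := ArithmeticFunction.vonMangoldt n

/-- A multiplicative function `f : ℕ → ℂ` whose Dirichlet series `F(s) = ∑ f(n) n^{-s}`
converges absolutely for `Re(s) > 1`, together with the coefficients `a = a_f`, supported on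
prime powers, determined by `-F'(s)/F(s) = ∑ a_f(n) Λ(n) n^{-s}` for `Re(s) > 1`. -/
structure MultData where
  f : ℕ → ℂ
  a : ℕ → ℂ
  f_one : f 1 = 1
  f_mul : ∀ m n : ℕ, Nat.Coprime m n → f (m * n) = f m * f n
  abs_conv : ∀ s : ℂ, 1 < s.re → Summable fun n : ℕ => ‖f n / (n : ℂ) ^ s‖
  a_supp : ∀ n : ℕ, ¬ IsPrimePow n → a n = 0
  a_summable : ∀ s : ℂ, 1 < s.re → Summable fun n : ℕ => a n * (vM n : ℂ) / (n : ℂ) ^ s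
  log_deriv : ∀ s : ℂ, 1 < s.re →
    deriv (fun z : ℂ => ∑' n : ℕ, f n / (n : ℂ) ^ z) s
      = -((∑' n : ℕ, f n / (n : ℂ) ^ s) * ∑' n : ℕ, a n * (vM n : ℂ) / (n : ℂ) ^ s)

/-- Membership in the class `C_w(κ)` (with constant `A₀`):
`∑_{x < n ≤ ex} |a_f(n)|² Λ(n)/n ≤ κ² + A₀ / log(ex)` for every `x ≥ 1`. -/
def MemCw (κ A₀ : ℝ) (D : MultData) : Prop :=
  ∀ x : ℝ, 1 ≤ x →
    ∑ n ∈ Finset.Ioc ⌊x⌋₊ ⌊Real.exp 1 * x⌋₊, ‖D.a n‖ ^ 2 * vM n / n ≤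
      κ ^ 2 + A₀ / Real.log (Real.exp 1 * x)


lemma vM_nonneg (n : ℕ) : 0 ≤ vM n := ArithmeticFunction.vonMangoldt_nonneg

lemma theta_le (N : ℕ) :
    ∑ p ∈ (range (N+1)).filter Nat.Prime, Real.log p ≤ N * Real.log 4 := by
  have h4 : ((primorial N : ℕ) : ℝ) ≤ ((4 ^ N : ℕ) : ℝ) := by
    exact_mod_cast primorial_le_4_pow N
  have hpos : (0:ℝ) < (primorial N : ℝ) := by exact_mod_cast primorial_pos N
  have := Real.log_le_log hpos h4
  rw [Nat.cast_pow, Real.log_pow] at this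
  refine le_trans (le_of_eq ?_) this
  rw [primorial, Nat.cast_prod, Real.log_prod]
  · intro p hp
    have := (mem_filter.1 hp).2.pos
    positivity

lemma psi_le (N : ℕ) : ∑ n ∈ Icc 1 N, vM n ≤ 6 * N := by
  rcases Nat.eq_zero_or_pos N with rfl | hN
  · simp
  have hlog2 : (0:ℝ) < Real.log 2 := Real.log_pos (by norm_num)
  have hsplit : ∑ n ∈ Icc 1 N, vM n
      = ∑ n ∈ (Icc 1 N).filter Nat.Prime, vM n
        + ∑ n ∈ (Icc 1 N).filter (fun n => ¬ Nat.Prime n), vM n :=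
    (Finset.sum_filter_add_sum_filter_not _ _ _).symm
  -- prime part
  have hprime : ∑ n ∈ (Icc 1 N).filter Nat.Prime, vM n ≤ N * Real.log 4 := by
    calc ∑ n ∈ (Icc 1 N).filter Nat.Prime, vM n
        = ∑ p ∈ (Icc 1 N).filter Nat.Prime, Real.log p := by
          refine Finset.sum_congr rfl fun p hp => ?_
          have hp' := (mem_filter.1 hp).2
          simp [vM, ArithmeticFunction.vonMangoldt_apply_prime hp']
      _ ≤ ∑ p ∈ (range (N+1)).filter Nat.Prime, Real.log p := by
          refine Finset.sum_le_sum_of_subset_of_nonneg ?_ ?_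
          · intro p hp
            simp only [mem_filter, mem_Icc, mem_range] at hp ⊢
            exact ⟨Nat.lt_succ_of_le hp.1.2, hp.2⟩
          · intro p hp _
            exact Real.log_nonneg (by exact_mod_cast (mem_filter.1 hp).2.one_lt.le)
      _ ≤ N * Real.log 4 := theta_le N
  -- prime power (non-prime) part
  have hpp : ∑ n ∈ (Icc 1 N).filter (fun n => ¬ Nat.Prime n), vM n ≤ 4 * N := by
    have h1 : ∑ n ∈ (Icc 1 N).filter (fun n => ¬ Nat.Prime n), vM n
        = ∑ n ∈ (Icc 1 N).filter (fun n => (IsPrimePow n ∧ ¬ Nat.Prime n)), vM n := by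
      rw [Finset.sum_filter, Finset.sum_filter]
      refine Finset.sum_congr rfl fun n _ => ?_
      by_cases hpp : IsPrimePow n
      · simp [hpp]
      · have : vM n = 0 := by
          simp [vM, ArithmeticFunction.vonMangoldt_eq_zero_iff.2 hpp]
        simp [hpp, this]
    rw [h1]
    set A := (Icc 1 N).filter (fun n => (IsPrimePow n ∧ ¬ Nat.Prime n)) with hA
    set Lg := Nat.log 2 N with hLg
    set S := ((range (Nat.sqrt N + 1)).filter Nat.Prime) ×ˢ (Icc 2 Lg) with hS
    have key : ∀ n ∈ A, n.minFac ^ (n.factorization n.minFac) = n ∧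
        (n.minFac, n.factorization n.minFac) ∈ S := by
      intro n hn
      simp only [hA, mem_filter, mem_Icc] at hn
      obtain ⟨⟨hn1, hnN⟩, hppn, hnp⟩ := hn
      have hrec := hppn.minFac_pow_factorization_eq
      refine ⟨hrec, ?_⟩
      have hpf : n.minFac.Prime := Nat.minFac_prime hppn.ne_one
      set k := n.factorization n.minFac with hk
      have hk2 : 2 ≤ k := by
        rcases Nat.lt_or_ge k 2 with hlt | h2
        · interval_cases k
          · rw [pow_zero] at hrec; exact absurd hrec.symm hppn.ne_one
          · rw [pow_one] at hrec; exact absurd (hrec ▸ hpf) hnp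
        · exact h2
      have hp2 : n.minFac * n.minFac ≤ N := by
        calc n.minFac * n.minFac = n.minFac ^ 2 := (sq n.minFac).symm
        _ ≤ n.minFac ^ k := Nat.pow_le_pow_right hpf.pos hk2
        _ = n := hrec
        _ ≤ N := hnN
      have hkL : k ≤ Lg := by
        rw [hLg, Nat.le_log_iff_pow_le (by norm_num) (by omega)]
        calc 2 ^ k ≤ n.minFac ^ k := Nat.pow_le_pow_left hpf.two_le k
        _ = n := hrec
        _ ≤ N := hnN
      simp only [hS, Finset.mem_product, mem_filter, mem_range, mem_Icc]
      exact ⟨⟨Nat.lt_succ_of_le (Nat.le_sqrt.2 hp2), hpf⟩, hk2, hkL⟩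
    have hval : ∀ n ∈ A, vM n = Real.log n.minFac := by
      intro n hn
      simp only [hA, mem_filter] at hn
      simp [vM, ArithmeticFunction.vonMangoldt_apply, hn.2.1]
    -- injection
    have hinj : ∑ n ∈ A, vM n ≤ ∑ q ∈ S, Real.log (q.1 : ℝ) := by
      have himg : ∑ n ∈ A, vM n
          = ∑ q ∈ A.image (fun n => ((n.minFac, n.factorization n.minFac) : ℕ × ℕ)),
              Real.log (q.1 : ℝ) := by
        rw [Finset.sum_image]
        · exact Finset.sum_congr rfl hval
        · intro m hm n hn hmn
          have h1 := (key m hm).1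
          have h2 := (key n hn).1
          rw [Prod.mk.injEq] at hmn
          rw [← h1, ← h2, hmn.2, hmn.1]
      rw [himg]
      refine Finset.sum_le_sum_of_subset_of_nonneg ?_ ?_
      · intro q hq
        obtain ⟨n, hn, rfl⟩ := Finset.mem_image.1 hq
        exact (key n hn).2
      · intro q hq _
        simp only [hS, Finset.mem_product, mem_filter] at hq
        exact Real.log_nonneg (by exact_mod_cast hq.1.2.one_lt.le)
    have hSsum : ∑ q ∈ S, Real.log (q.1 : ℝ)
        = ((Icc 2 Lg).card : ℝ) * ∑ p ∈ (range (Nat.sqrt N + 1)).filter Nat.Prime,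
            Real.log (p : ℝ) := by
      rw [hS, Finset.sum_product]
      simp only [Finset.sum_const, nsmul_eq_mul]
      rw [Finset.mul_sum]
    have hcard : ((Icc 2 Lg).card : ℝ) ≤ Lg := by
      have : (Icc 2 Lg).card ≤ Lg := by rw [Nat.card_Icc]; omega
      exact_mod_cast this
    have hLreal : (Lg:ℝ) * Real.log 2 ≤ Real.log N := by
      have h2L : (2:ℝ) ^ Lg ≤ (N:ℝ) := by
        exact_mod_cast Nat.pow_log_le_self 2 (by omega : N ≠ 0)
      calc (Lg:ℝ) * Real.log 2 = Real.log ((2:ℝ) ^ Lg) := by rw [Real.log_pow]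
      _ ≤ Real.log N := Real.log_le_log (by positivity) h2L
    set s := Real.sqrt (N:ℝ) with hs
    have hss : s * s = N := Real.mul_self_sqrt (by positivity)
    have hsqrtle : (Nat.sqrt N : ℝ) ≤ s := by
      have h1 : ((Nat.sqrt N : ℝ)) ^ 2 ≤ (N:ℝ) := by
        exact_mod_cast Nat.sqrt_le' N
      calc (Nat.sqrt N : ℝ) = Real.sqrt ((Nat.sqrt N : ℝ) ^ 2) := by
            rw [Real.sqrt_sq (by positivity)]
      _ ≤ s := Real.sqrt_le_sqrt h1
    have hlogN : Real.log N ≤ 2 * s := by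
      have h := Real.log_le_sub_one_of_pos (x := s) (by
        rw [hs]; exact Real.sqrt_pos.2 (by exact_mod_cast hN))
      have h2 : Real.log (N:ℝ) = 2 * Real.log s := by
        rw [hs, Real.log_sqrt (by positivity)]; ring
      nlinarith [Real.sqrt_nonneg (N:ℝ)]
    have hLle : (Lg:ℝ) ≤ 2 * s / Real.log 2 := by
      rw [le_div_iff₀ hlog2]
      exact hLreal.trans hlogN
    have htheta := theta_le (Nat.sqrt N)
    have hthetanneg : (0:ℝ) ≤ ∑ p ∈ (range (Nat.sqrt N + 1)).filter Nat.Prime,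
        Real.log (p:ℝ) := by
      refine Finset.sum_nonneg fun p hp => ?_
      exact Real.log_nonneg (by exact_mod_cast (mem_filter.1 hp).2.one_lt.le)
    have hlog4 : Real.log 4 = 2 * Real.log 2 := by
      rw [show (4:ℝ) = 2^2 by norm_num, Real.log_pow]; push_cast; ring
    have hsnn : 0 ≤ s := Real.sqrt_nonneg _
    calc ∑ n ∈ A, vM n ≤ ∑ q ∈ S, Real.log (q.1:ℝ) := hinj
    _ = ((Icc 2 Lg).card : ℝ) * ∑ p ∈ (range (Nat.sqrt N + 1)).filter Nat.Prime,
          Real.log (p:ℝ) := hSsum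
    _ ≤ (Lg:ℝ) * ((Nat.sqrt N) * Real.log 4) := mul_le_mul hcard htheta hthetanneg (by positivity)
    _ ≤ (2 * s / Real.log 2) * (s * Real.log 4) := by
        refine mul_le_mul hLle ?_ (by positivity) (by positivity)
        exact mul_le_mul_of_nonneg_right hsqrtle (Real.log_nonneg (by norm_num))
    _ = 4 * (s * s) := by rw [hlog4]; field_simp; ring
    _ = 4 * N := by rw [hss]
  have hlog4le : Real.log 4 ≤ 2 := by
    have h2 : Real.log 2 ≤ 1 := by
      have := Real.log_le_sub_one_of_pos (x := (2:ℝ)) (by norm_num)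
      linarith
    have : Real.log 4 = 2 * Real.log 2 := by
      rw [show (4:ℝ) = 2^2 by norm_num, Real.log_pow]; push_cast; ring
    linarith
  have hN4 : (N:ℝ) * Real.log 4 ≤ 2 * N := by
    nlinarith [Nat.cast_nonneg (α := ℝ) N, Real.log_nonneg (show (1:ℝ) ≤ 4 by norm_num)]
  linarith [hsplit, hprime, hpp, hN4]

lemma lseries_unique {c : ℕ → ℂ} (hs : ∀ σ : ℝ, 1 < σ → LSeriesSummable c σ)
    (h0 : ∀ σ : ℝ, 1 < σ → LSeries c σ = 0) : ∀ n, n ≠ 0 → c n = 0 := by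
  intro n
  induction n using Nat.strong_induction_on with
  | _ N ih =>
  intro hN0
  have hNpos : 0 < N := Nat.pos_of_ne_zero hN0
  have hNr : (0:ℝ) < N := by exact_mod_cast hNpos
  set F : ℝ → ℕ → ℂ := fun σ k => (N:ℂ) ^ (σ:ℂ) * LSeries.term c σ k with hF
  set g : ℕ → ℂ := fun k => if k = N then c N else 0 with hg
  set bound : ℕ → ℝ := fun k => (N:ℝ)^(2:ℝ) * ‖LSeries.term c 2 k‖ with hbound
  have hbsum : Summable bound := ((hs 2 (by norm_num)).norm.mul_left _)
  have hNne : ((N:ℂ)) ≠ 0 := by exact_mod_cast hN0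
  have hnormN : ∀ σ : ℝ, ‖((N:ℂ)) ^ (σ:ℂ)‖ = (N:ℝ) ^ σ := by
    intro σ
    rw [norm_natCast_cpow_of_pos hNpos]
    simp
  have hnorm : ∀ (σ : ℝ) (k : ℕ), k ≠ 0 → ‖F σ k‖ = ‖c k‖ * ((N:ℝ)/(k:ℝ)) ^ σ := by
    intro σ k hk0
    have hkr : (0:ℝ) < k := by exact_mod_cast Nat.pos_of_ne_zero hk0
    rw [hF]
    simp only
    rw [norm_mul, hnormN, LSeries.norm_term_eq, if_neg hk0]
    have hre : ((σ:ℂ)).re = σ := by simp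
    rw [hre, Real.div_rpow hNr.le hkr.le]
    have : ((k:ℝ)) ^ σ ≠ 0 := by positivity
    field_simp
  have hlim : ∀ k : ℕ, Tendsto (F · k) atTop (𝓝 (g k)) := by
    intro k
    rcases eq_or_ne k 0 with rfl | hk0
    · have : ∀ σ : ℝ, F σ 0 = 0 := fun σ => by simp [hF, LSeries.term_zero]
      simp only [hg, if_neg (by omega : (0:ℕ) ≠ N)]
      exact tendsto_const_nhds.congr fun σ => (this σ).symm
    rcases lt_trichotomy k N with hlt | heq | hgt
    · have hc : c k = 0 := ih k hlt hk0
      have : ∀ σ : ℝ, F σ k = 0 := fun σ => by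
        simp [hF, LSeries.term_of_ne_zero hk0, hc]
      simp only [hg, if_neg (by omega : k ≠ N)]
      exact tendsto_const_nhds.congr fun σ => (this σ).symm
    · subst heq
      have hcpow_ne : ∀ σ : ℝ, ((k:ℂ)) ^ (σ:ℂ) ≠ 0 := fun σ => by
        rw [Complex.cpow_def_of_ne_zero hNne]; exact Complex.exp_ne_zero _
      have : ∀ σ : ℝ, F σ k = c k := by
        intro σ
        rw [hF]
        simp only
        rw [LSeries.term_of_ne_zero hk0]
        rw [mul_div_assoc']
        rw [mul_comm ((k:ℂ) ^ (σ:ℂ)) (c k)]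
        rw [mul_div_assoc, div_self (hcpow_ne σ), mul_one]
      simp only [hg, if_pos rfl]
      exact tendsto_const_nhds.congr fun σ => (this σ).symm
    · simp only [hg, if_neg (by omega : k ≠ N)]
      have hkr : (0:ℝ) < k := by exact_mod_cast (by omega : 0 < k)
      have hr1 : (N:ℝ)/(k:ℝ) < 1 := by
        rw [div_lt_one hkr]; exact_mod_cast hgt
      have htend : Tendsto (fun σ : ℝ => ‖c k‖ * ((N:ℝ)/(k:ℝ)) ^ σ) atTop (𝓝 0) := by
        have hm1 : (-1:ℝ) < (N:ℝ)/(k:ℝ) := by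
          have : (0:ℝ) < (N:ℝ)/(k:ℝ) := by positivity
          linarith
        have h1 := (tendsto_rpow_atTop_of_base_lt_one ((N:ℝ)/(k:ℝ)) hm1 hr1).const_mul ‖c k‖
        simpa using h1
      rw [tendsto_zero_iff_norm_tendsto_zero]
      exact htend.congr fun σ => (hnorm σ k hk0).symm
  have hbd : ∀ᶠ σ : ℝ in atTop, ∀ k, ‖F σ k‖ ≤ bound k := by
    filter_upwards [eventually_ge_atTop (2:ℝ)] with σ hσ2 k
    rcases eq_or_ne k 0 with rfl | hk0
    · simp only [hF, hg, LSeries.term_zero, mul_zero, norm_zero]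
      positivity
    have hkr : (0:ℝ) < k := by exact_mod_cast Nat.pos_of_ne_zero hk0
    rcases lt_or_ge k N with hlt | hge
    · have hc : c k = 0 := ih k hlt hk0
      have : F σ k = 0 := by simp [hF, LSeries.term_of_ne_zero hk0, hc]
      rw [this, norm_zero]
      positivity
    · rw [hnorm σ k hk0, hbound]
      simp only
      rw [LSeries.norm_term_eq, if_neg hk0]
      have hre : ((2:ℂ)).re = (2:ℝ) := by norm_num
      rw [hre]
      have hrle : (N:ℝ)/(k:ℝ) ≤ 1 := by
        rw [div_le_one hkr]; exact_mod_cast hge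
      have hmono : ((N:ℝ)/(k:ℝ)) ^ σ ≤ ((N:ℝ)/(k:ℝ)) ^ (2:ℝ) :=
        Real.rpow_le_rpow_of_exponent_ge (by positivity) hrle hσ2
    -- ‖c k‖ * (N/k)^σ ≤ N^2 * (‖c k‖ / k^2)
      calc ‖c k‖ * ((N:ℝ)/(k:ℝ)) ^ σ ≤ ‖c k‖ * ((N:ℝ)/(k:ℝ)) ^ (2:ℝ) := by
            exact mul_le_mul_of_nonneg_left hmono (norm_nonneg _)
      _ = (N:ℝ)^(2:ℝ) * (‖c k‖ / (k:ℝ)^(2:ℝ)) := by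
            rw [Real.div_rpow hNr.le hkr.le]
            field_simp
  have hmain := tendsto_tsum_of_dominated_convergence hbsum hlim hbd
  have hzero : (fun σ : ℝ => ∑' k, F σ k) =ᶠ[atTop] (fun _ => 0) := by
    filter_upwards [eventually_gt_atTop (1:ℝ)] with σ hσ
    have hsig : ((σ:ℂ)).re = σ := by simp
    have : ∑' k, F σ k = (N:ℂ) ^ (σ:ℂ) * LSeries c σ := by
      rw [hF, LSeries]
      exact tsum_mul_left
    rw [this, h0 σ hσ, mul_zero]
  have h2 : Tendsto (fun σ : ℝ => ∑' k, F σ k) atTop (𝓝 0) :=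
    Tendsto.congr' hzero.symm tendsto_const_nhds
  have := tendsto_nhds_unique hmain h2
  rw [hg] at this
  rwa [tsum_ite_eq N (fun _ => c N)] at this

lemma coeff_identity (D : MultData) (n : ℕ) (hn : n ≠ 0) :
    Complex.log n * D.f n
      = ∑ p ∈ n.divisorsAntidiagonal, D.f p.1 * (D.a p.2 * (vM p.2 : ℂ)) := by
  set b : ℕ → ℂ := fun k => D.a k * (vM k : ℂ) with hb
  have hterm : ∀ (u : ℕ → ℂ) (s : ℂ), s ≠ 0 → term u s = fun m => u m / (m:ℂ)^s := by
    intro u s hs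
    funext m
    rcases eq_or_ne m 0 with rfl | hm
    · rw [term_zero, Nat.cast_zero, Complex.zero_cpow hs, div_zero]
    · rw [term_of_ne_zero hm]
  have hne : ∀ s : ℂ, 1 < s.re → s ≠ 0 := by
    intro s hs hc; rw [hc] at hs; norm_num at hs
  have hsumf : ∀ s : ℂ, 1 < s.re → LSeriesSummable D.f s := by
    intro s hs
    rw [LSeriesSummable, hterm D.f s (hne s hs)]
    exact Summable.of_norm (D.abs_conv s hs)
  have hsumb : ∀ s : ℂ, 1 < s.re → LSeriesSummable b s := by
    intro s hs
    rw [LSeriesSummable, hterm b s (hne s hs)]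
    exact D.a_summable s hs
  have habs : abscissaOfAbsConv D.f ≤ 1 :=
    abscissaOfAbsConv_le_of_forall_lt_LSeriesSummable' fun y hy =>
      hsumf y (by simpa using (by exact_mod_cast hy : (1:ℝ) < y))
  have habs_lt : ∀ s : ℂ, 1 < s.re → abscissaOfAbsConv D.f < (s.re : EReal) := by
    intro s hs
    exact lt_of_le_of_lt habs (by exact_mod_cast hs)
  have hLf : ∀ s : ℂ, 1 < s.re → LSeries D.f s = ∑' m, D.f m / (m:ℂ)^s := by
    intro s hs
    rw [LSeries, hterm D.f s (hne s hs)]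
  have hLb : ∀ s : ℂ, 1 < s.re → LSeries b s = ∑' m, b m / (m:ℂ)^s := by
    intro s hs
    rw [LSeries, hterm b s (hne s hs)]
  have hkey : ∀ s : ℂ, 1 < s.re → LSeries (logMul D.f) s = LSeries (D.f ⍟ b) s := by
    intro s hs
    have hopen : IsOpen {z : ℂ | 1 < z.re} := isOpen_lt continuous_const Complex.continuous_re
    have hEq : (fun z : ℂ => (∑' m, D.f m / (m:ℂ)^z)) =ᶠ[nhds s] (LSeries D.f) := by
      filter_upwards [hopen.mem_nhds hs] with z hz
      exact (hLf z hz).symm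
    have hderiv : deriv (LSeries D.f) s
        = -((∑' m, D.f m / (m:ℂ)^s) * ∑' m, b m / (m:ℂ)^s) := by
      rw [← hEq.deriv_eq]
      exact D.log_deriv s hs
    have h1 : deriv (LSeries D.f) s = -LSeries (logMul D.f) s := LSeries_deriv (habs_lt s hs)
    have h2 : LSeries (logMul D.f) s = LSeries D.f s * LSeries b s := by
      have := h1.symm.trans hderiv
      rw [neg_inj] at this
      rw [this, hLf s hs, hLb s hs]
    rw [h2, LSeries_convolution' (hsumf s hs) (hsumb s hs)]
  set c : ℕ → ℂ := logMul D.f - (D.f ⍟ b) with hc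
  have hre : ∀ σ : ℝ, 1 < σ → 1 < ((σ:ℂ)).re := by intro σ hσ; simpa using hσ
  have hcs : ∀ σ : ℝ, 1 < σ → LSeriesSummable c σ := by
    intro σ hσ
    exact (LSeriesSummable_logMul_of_lt_re (habs_lt σ (hre σ hσ))).sub
      ((hsumf σ (hre σ hσ)).convolution (hsumb σ (hre σ hσ)))
  have hc0 : ∀ σ : ℝ, 1 < σ → LSeries c σ = 0 := by
    intro σ hσ
    rw [hc, LSeries_sub (LSeriesSummable_logMul_of_lt_re (habs_lt σ (hre σ hσ)))
      ((hsumf σ (hre σ hσ)).convolution (hsumb σ (hre σ hσ))),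
      hkey σ (hre σ hσ), sub_self]
  have := lseries_unique hcs hc0 n hn
  rw [hc, Pi.sub_apply, sub_eq_zero] at this
  calc Complex.log n * D.f n = logMul D.f n := rfl
  _ = (D.f ⍟ b) n := this
  _ = ∑ p ∈ n.divisorsAntidiagonal, D.f p.1 * (D.a p.2 * (vM p.2 : ℂ)) := by
      rw [LSeries.convolution_def]

lemma sum_rearrange (M : ℕ) (F : ℕ → ℕ → ℝ) :
    ∑ n ∈ Icc 1 M, ∑ p ∈ n.divisorsAntidiagonal, F p.1 p.2
      = ∑ d ∈ Icc 1 M, ∑ e ∈ Icc 1 (M / d), F d e := by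
  rw [Finset.sum_sigma', Finset.sum_sigma']
  refine Finset.sum_nbij' (fun x => ⟨x.2.1, x.2.2⟩) (fun y => ⟨y.1 * y.2, (y.1, y.2)⟩)
    ?_ ?_ ?_ ?_ ?_
  · rintro ⟨n, d, e⟩ hx
    simp only [Finset.mem_sigma, mem_Icc, Nat.mem_divisorsAntidiagonal] at hx ⊢
    obtain ⟨⟨hn1, hnM⟩, hde, hn0⟩ := hx
    have hd : 0 < d := by
      rcases Nat.eq_zero_or_pos d with rfl | h
      · simp at hde; omega
      · exact h
    have he : 0 < e := by
      rcases Nat.eq_zero_or_pos e with rfl | h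
      · simp at hde; omega
      · exact h
    refine ⟨⟨hd, ?_⟩, he, ?_⟩
    · calc d ≤ d * e := Nat.le_mul_of_pos_right d he
      _ = n := hde
      _ ≤ M := hnM
    · rw [Nat.le_div_iff_mul_le hd, mul_comm]
      omega
  · rintro ⟨d, e⟩ hy
    simp only [Finset.mem_sigma, mem_Icc] at hy
    obtain ⟨⟨hd1, hdM⟩, he1, heM⟩ := hy
    rw [Nat.le_div_iff_mul_le (by omega : 0 < d)] at heM
    have hde : d * e ≤ M := by rw [mul_comm] at heM; exact heM
    have hne : d * e ≠ 0 := Nat.mul_ne_zero (by omega) (by omega)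
    refine Finset.mem_sigma.2 ⟨mem_Icc.2 ⟨Nat.one_le_iff_ne_zero.2 hne, hde⟩,
      Nat.mem_divisorsAntidiagonal.2 ⟨rfl, hne⟩⟩
  · rintro ⟨n, d, e⟩ hx
    simp only [Finset.mem_sigma, mem_Icc, Nat.mem_divisorsAntidiagonal] at hx
    obtain ⟨_, hde, _⟩ := hx
    simp [hde]
  · rintro ⟨d, e⟩ _
    rfl
  · rintro ⟨n, d, e⟩ _
    rfl

lemma window_bound (a : ℕ → ℂ) (α A₀ : ℝ) (hα : 1 ≤ α) (hA : 1 ≤ A₀)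
    (hW : ∀ x : ℝ, 1 ≤ x →
      ∑ n ∈ Finset.Ioc ⌊x⌋₊ ⌊Real.exp 1 * x⌋₊, ‖a n‖ ^ 2 * vM n / n ≤
        α ^ 2 + A₀ / Real.log (Real.exp 1 * x))
    (x : ℝ) (hx : 1 ≤ x) :
    ∑ n ∈ Finset.Ioc ⌊x⌋₊ ⌊Real.exp 1 * x⌋₊, ‖a n‖ * vM n
      ≤ Real.sqrt (6 * (α ^ 2 + A₀)) * (Real.exp 1 * x) := by
  set W := Finset.Ioc ⌊x⌋₊ ⌊Real.exp 1 * x⌋₊ with hWdef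
  set N := ⌊Real.exp 1 * x⌋₊ with hN
  have he1 : (1:ℝ) ≤ Real.exp 1 := by
    rw [← Real.exp_zero]; exact Real.exp_le_exp.2 (by norm_num)
  have hex1 : (1:ℝ) ≤ Real.exp 1 * x := by nlinarith
  have hn0 : ∀ n ∈ W, n ≠ 0 := by
    intro n hn
    have := (Finset.mem_Ioc.1 hn).1
    omega
  set u : ℕ → ℝ := fun n => ‖a n‖ * Real.sqrt (vM n / n) with hu
  set v : ℕ → ℝ := fun n => Real.sqrt (n * vM n) with hv
  have huv : ∀ n ∈ W, ‖a n‖ * vM n = u n * v n := by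
    intro n hn
    have hnr : (0:ℝ) < n := by exact_mod_cast Nat.pos_of_ne_zero (hn0 n hn)
    rw [hu, hv]
    simp only
    rw [mul_assoc, ← Real.sqrt_mul (div_nonneg (vM_nonneg n) (le_of_lt hnr))]
    have : vM n / n * (n * vM n) = vM n ^ 2 := by field_simp
    rw [this, Real.sqrt_sq (vM_nonneg n)]
  have hCS := Finset.sum_mul_sq_le_sq_mul_sq W u v
  have hu2 : ∑ n ∈ W, u n ^ 2 ≤ α ^ 2 + A₀ := by
    have h1 : ∑ n ∈ W, u n ^ 2 = ∑ n ∈ W, ‖a n‖ ^ 2 * vM n / n := by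
      refine Finset.sum_congr rfl fun n hn => ?_
      have hnr : (0:ℝ) ≤ (n:ℝ) := Nat.cast_nonneg n
      rw [hu]
      simp only
      rw [mul_pow, Real.sq_sqrt (div_nonneg (vM_nonneg n) (Nat.cast_nonneg n)), mul_div_assoc]
    have h2 := hW x hx
    have hlog : 1 ≤ Real.log (Real.exp 1 * x) := by
      rw [Real.log_mul (by positivity) (by positivity), Real.log_exp]
      have := Real.log_nonneg hx
      linarith
    have h3 : A₀ / Real.log (Real.exp 1 * x) ≤ A₀ :=
      div_le_self (by linarith) hlog
    rw [h1]
    calc ∑ n ∈ W, ‖a n‖ ^ 2 * vM n / n ≤ α ^ 2 + A₀ / Real.log (Real.exp 1 * x) := h2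
    _ ≤ α ^ 2 + A₀ := by linarith
  have hv2 : ∑ n ∈ W, v n ^ 2 ≤ (N:ℝ) * (6 * N) := by
    have h1 : ∑ n ∈ W, v n ^ 2 = ∑ n ∈ W, (n:ℝ) * vM n := by
      refine Finset.sum_congr rfl fun n hn => ?_
      rw [hv]
      simp only
      exact Real.sq_sqrt (mul_nonneg (Nat.cast_nonneg n) (vM_nonneg n))
    rw [h1]
    calc ∑ n ∈ W, (n:ℝ) * vM n ≤ ∑ n ∈ W, (N:ℝ) * vM n := by
          refine Finset.sum_le_sum fun n hn => ?_
          have := (Finset.mem_Ioc.1 hn).2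
          exact mul_le_mul_of_nonneg_right (by exact_mod_cast this) (vM_nonneg n)
    _ = (N:ℝ) * ∑ n ∈ W, vM n := by rw [Finset.mul_sum]
    _ ≤ (N:ℝ) * ∑ n ∈ Icc 1 N, vM n := by
          refine mul_le_mul_of_nonneg_left ?_ (Nat.cast_nonneg N)
          refine Finset.sum_le_sum_of_subset_of_nonneg ?_ (fun n _ _ => vM_nonneg n)
          intro n hn
          rw [Finset.mem_Ioc] at hn
          rw [Finset.mem_Icc]
          omega
    _ ≤ (N:ℝ) * (6 * N) := mul_le_mul_of_nonneg_left (psi_le N) (Nat.cast_nonneg N)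
  have hNle : (N:ℝ) ≤ Real.exp 1 * x := Nat.floor_le (by positivity)
  set T := ∑ n ∈ W, ‖a n‖ * vM n with hT
  have hTnn : 0 ≤ T := Finset.sum_nonneg fun n _ => mul_nonneg (norm_nonneg _) (vM_nonneg n)
  have hTuv : T = ∑ n ∈ W, u n * v n := Finset.sum_congr rfl huv
  have hT2 : T ^ 2 ≤ 6 * (α ^ 2 + A₀) * (Real.exp 1 * x) ^ 2 := by
    have h0 : (0:ℝ) ≤ ∑ n ∈ W, u n ^ 2 := Finset.sum_nonneg fun n _ => sq_nonneg _
    calc T ^ 2 = (∑ n ∈ W, u n * v n) ^ 2 := by rw [hTuv]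
    _ ≤ (∑ n ∈ W, u n ^ 2) * (∑ n ∈ W, v n ^ 2) := hCS
    _ ≤ (α ^ 2 + A₀) * ((N:ℝ) * (6 * N)) := by
        refine mul_le_mul hu2 hv2 (Finset.sum_nonneg fun n _ => sq_nonneg _) (by positivity)
    _ = 6 * (α ^ 2 + A₀) * ((N:ℝ) * N) := by ring
    _ ≤ 6 * (α ^ 2 + A₀) * ((Real.exp 1 * x) * (Real.exp 1 * x)) := by
        refine mul_le_mul_of_nonneg_left ?_ (by positivity)
        exact mul_le_mul hNle hNle (Nat.cast_nonneg N) (by positivity)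
    _ = 6 * (α ^ 2 + A₀) * (Real.exp 1 * x) ^ 2 := by ring
  have hRnn : (0:ℝ) ≤ Real.sqrt (6 * (α ^ 2 + A₀)) * (Real.exp 1 * x) := by positivity
  have hsq : (Real.sqrt (6 * (α ^ 2 + A₀)) * (Real.exp 1 * x)) ^ 2
      = 6 * (α ^ 2 + A₀) * (Real.exp 1 * x) ^ 2 := by
    rw [mul_pow, Real.sq_sqrt (by positivity)]
  have := hT2.trans_eq hsq.symm
  exact (pow_le_pow_iff_left₀ hTnn hRnn (by norm_num)).1 this

lemma S_bound (a : ℕ → ℂ) (α A₀ : ℝ) (hα : 1 ≤ α) (hA : 1 ≤ A₀)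
    (hW : ∀ x : ℝ, 1 ≤ x →
      ∑ n ∈ Finset.Ioc ⌊x⌋₊ ⌊Real.exp 1 * x⌋₊, ‖a n‖ ^ 2 * vM n / n ≤
        α ^ 2 + A₀ / Real.log (Real.exp 1 * x)) :
    ∀ N : ℕ, ∑ n ∈ Icc 1 N, ‖a n‖ * vM n
      ≤ (2 * Real.sqrt (6 * (α ^ 2 + A₀))) * N := by
  set B := Real.sqrt (6 * (α ^ 2 + A₀)) with hB
  have hBnn : 0 ≤ B := Real.sqrt_nonneg _
  have heL : Real.exp 1 < 2.7182818286 := Real.exp_one_lt_d9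
  have heG : 2.7182818283 < Real.exp 1 := Real.exp_one_gt_d9
  intro N
  induction N using Nat.strong_induction_on with
  | _ N ih =>
  rcases Nat.lt_or_ge N 3 with hN3 | hN3
  · -- small cases
    have hfloor1 : ⌊(1:ℝ)⌋₊ = 1 := Nat.floor_one
    have hfloore : ⌊Real.exp 1 * 1⌋₊ = 2 := by
      rw [mul_one]
      rw [Nat.floor_eq_iff (by positivity)]
      push_cast
      constructor <;> linarith
    have hwin := window_bound a α A₀ hα hA hW 1 le_rfl
    rw [hfloor1, hfloore, mul_one] at hwin
    have hvm1 : vM 1 = 0 := by simp [vM]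
    interval_cases N
    · simp
    · rw [show Icc 1 1 = {1} by rfl]
      rw [Finset.sum_singleton, hvm1, mul_zero]
      positivity
    · have h12 : Icc 1 2 = {1, 2} := by rfl
      have hIoc : Finset.Ioc 1 2 = {2} := by rfl
      rw [h12, Finset.sum_insert (by norm_num), Finset.sum_singleton, hvm1, mul_zero, zero_add]
      have : ∑ n ∈ Finset.Ioc 1 2, ‖a n‖ * vM n = ‖a 2‖ * vM 2 := by
        rw [hIoc, Finset.sum_singleton]
      rw [this] at hwin
      calc ‖a 2‖ * vM 2 ≤ B * Real.exp 1 := hwin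
      _ ≤ B * 4 := by nlinarith
      _ = 2 * B * 2 := by ring
      _ = 2 * B * ((2:ℕ):ℝ) := by norm_num
  · -- main induction step
    have hNr : (3:ℝ) ≤ N := by exact_mod_cast hN3
    set x := (N:ℝ) / Real.exp 1 with hx
    have hx1 : 1 ≤ x := by
      rw [hx, le_div_iff₀ (by positivity)]
      linarith
    set M := ⌊x⌋₊ with hM
    have hMx : (M:ℝ) ≤ x := Nat.floor_le (by positivity)
    have hex : Real.exp 1 * x = N := by
      rw [hx]; field_simp
    have hfloorN : ⌊Real.exp 1 * x⌋₊ = N := by rw [hex, Nat.floor_natCast]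
    have hMN : M < N := by
      have : (M:ℝ) < N := by
        calc (M:ℝ) ≤ x := hMx
        _ = N / Real.exp 1 := rfl
        _ < N := by
          rw [div_lt_iff₀ (by positivity)]
          nlinarith
      exact_mod_cast this
    have h2M : 2 * (M:ℝ) ≤ N := by
      have h1 : (M:ℝ) ≤ (N:ℝ) / Real.exp 1 := hMx
      have h2 : (N:ℝ) / Real.exp 1 ≤ (N:ℝ) / 2 := by
        refine div_le_div_of_nonneg_left (by linarith) (by norm_num) (by linarith)
      linarith
    have hsplit : Icc 1 N = Finset.Ioc 0 M ∪ Finset.Ioc M N := by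
      rw [Finset.Ioc_union_Ioc_eq_Ioc (Nat.zero_le M) (le_of_lt hMN)]
      exact Finset.Icc_add_one_left_eq_Ioc 0 N
    have hdisj : Disjoint (Finset.Ioc 0 M) (Finset.Ioc M N) := by
      rw [Finset.disjoint_left]
      intro n h1 h2
      rw [Finset.mem_Ioc] at h1 h2
      omega
    have hIccM : Finset.Ioc 0 M = Icc 1 M := (Finset.Icc_add_one_left_eq_Ioc 0 M).symm
    have hwin := window_bound a α A₀ hα hA hW x hx1
    rw [hfloorN, hex] at hwin
    have hih := ih M hMN
    calc ∑ n ∈ Icc 1 N, ‖a n‖ * vM n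
        = ∑ n ∈ Finset.Ioc 0 M, ‖a n‖ * vM n + ∑ n ∈ Finset.Ioc M N, ‖a n‖ * vM n := by
          rw [hsplit, Finset.sum_union hdisj]
    _ ≤ 2 * B * M + B * N := by
          rw [hIccM]
          exact add_le_add hih hwin
    _ ≤ 2 * B * N := by nlinarith

lemma norm_f_eq (D : MultData) (hpos : ∀ n : ℕ, 0 ≤ (D.f n).re ∧ (D.f n).im = 0) (d : ℕ) :
    ‖D.f d‖ = (D.f d).re := by
  have h1 : D.f d = (((D.f d).re : ℝ) : ℂ) := by
    apply Complex.ext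
    · rfl
    · simp [(hpos d).2]
  rw [h1]
  rw [Complex.norm_real]
  exact abs_of_nonneg (hpos d).1

lemma pointwise_ineq (D : MultData) (hpos : ∀ n : ℕ, 0 ≤ (D.f n).re ∧ (D.f n).im = 0)
    (n : ℕ) (hn : n ≠ 0) :
    (D.f n).re * Real.log n
      ≤ ∑ p ∈ n.divisorsAntidiagonal, (D.f p.1).re * (‖D.a p.2‖ * vM p.2) := by
  have hid := coeff_identity D n hn
  have hlog : Complex.log (n:ℂ) = ((Real.log n : ℝ) : ℂ) := by
    rw [show ((n:ℂ)) = (((n:ℝ)) : ℂ) by push_cast; ring]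
    exact (Complex.ofReal_log (Nat.cast_nonneg n)).symm
  have hre : (Complex.log (n:ℂ) * D.f n).re = Real.log n * (D.f n).re := by
    rw [hlog, Complex.re_ofReal_mul]
  have h2 : (Complex.log (n:ℂ) * D.f n).re
      = ∑ p ∈ n.divisorsAntidiagonal, (D.f p.1 * (D.a p.2 * (vM p.2 : ℂ))).re := by
    rw [hid, Complex.re_sum]
  rw [mul_comm ((D.f n).re) (Real.log n), ← hre, h2]
  refine Finset.sum_le_sum fun p _ => ?_
  calc (D.f p.1 * (D.a p.2 * (vM p.2 : ℂ))).re
      ≤ ‖D.f p.1 * (D.a p.2 * (vM p.2 : ℂ))‖ := Complex.re_le_norm _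
  _ = ‖D.f p.1‖ * (‖D.a p.2‖ * ‖((vM p.2 : ℝ) : ℂ)‖) := by rw [norm_mul, norm_mul]
  _ = (D.f p.1).re * (‖D.a p.2‖ * vM p.2) := by
      rw [norm_f_eq D hpos, Complex.norm_real, Real.norm_eq_abs, _root_.abs_of_nonneg (vM_nonneg p.2)]


/-- For a nonnegative multiplicative `h ∈ C_w(α)` and `x ≥ 16`:
`∑_{n≤x} h(n) ≤ C (x/log x)(log log x) ∑_{n≤x} h(n)/n + C (x/log x)(log log x)^α`. -/
theorem stmt18 (α A₀ : ℝ) (hα : 1 ≤ α) (hA : 1 ≤ A₀) :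
    ∃ C : ℝ, 0 < C ∧ ∀ D : MultData, MemCw α A₀ D →
      (∀ n : ℕ, 0 ≤ (D.f n).re ∧ (D.f n).im = 0) → ∀ x : ℝ, 16 ≤ x →
      ∑ n ∈ Finset.Icc 1 ⌊x⌋₊, (D.f n).re ≤
        C * (x / Real.log x) * Real.log (Real.log x) *
            ∑ n ∈ Finset.Icc 1 ⌊x⌋₊, (D.f n).re / n
          + C * (x / Real.log x) * Real.log (Real.log x) ^ α := by
  set B := Real.sqrt (6 * (α ^ 2 + A₀)) with hB
  have hBnn : 0 ≤ B := Real.sqrt_nonneg _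
  set K := 2 * B with hK
  have hKnn : 0 ≤ K := by positivity
  refine ⟨2 + 2 * K, by positivity, ?_⟩
  intro D hCw hpos x hx16
  set M := ⌊x⌋₊ with hM
  set h : ℕ → ℝ := fun n => (D.f n).re with hh
  have hhnn : ∀ n, 0 ≤ h n := fun n => (hpos n).1
  have hx0 : (0:ℝ) < x := by linarith
  have hlog2 := Real.log_two_gt_d9
  have hlog16 : Real.log 16 = 4 * Real.log 2 := by
    rw [show (16:ℝ) = 2 ^ 4 by norm_num, Real.log_pow]
    push_cast; ring
  have hlogx16 : Real.log 16 ≤ Real.log x := Real.log_le_log (by norm_num) hx16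
  have hlxe : Real.exp 1 ≤ Real.log x := by
    have := Real.exp_one_lt_d9
    rw [hlog16] at hlogx16
    linarith
  have hlogpos : (0:ℝ) < Real.log x := lt_of_lt_of_le (Real.exp_pos 1) hlxe
  have hllx : (1:ℝ) ≤ Real.log (Real.log x) := by
    calc (1:ℝ) = Real.log (Real.exp 1) := (Real.log_exp 1).symm
    _ ≤ Real.log (Real.log x) := Real.log_le_log (Real.exp_pos 1) hlxe
  set Sig2 := ∑ n ∈ Finset.Icc 1 M, h n / n with hSig2
  have hSig2nn : 0 ≤ Sig2 := Finset.sum_nonneg fun n _ => div_nonneg (hhnn n) (Nat.cast_nonneg n)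
  set SL := ∑ n ∈ Finset.Icc 1 M, h n * Real.log n with hSL
  have hLnn : 0 ≤ SL := by
    refine Finset.sum_nonneg fun n hn => ?_
    have h1 : 1 ≤ n := (Finset.mem_Icc.1 hn).1
    exact mul_nonneg (hhnn n) (Real.log_nonneg (by exact_mod_cast h1))
  have hS := S_bound D.a α A₀ hα hA hCw
  -- step 1 : L ≤ K * x * Sig2
  have hstep1 : SL ≤ K * x * Sig2 := by
    have h1 : SL ≤ ∑ n ∈ Finset.Icc 1 M,
        ∑ p ∈ n.divisorsAntidiagonal, h p.1 * (‖D.a p.2‖ * vM p.2) := by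
      refine Finset.sum_le_sum fun n hn => ?_
      have hn0 : n ≠ 0 := by
        have := (Finset.mem_Icc.1 hn).1; omega
      exact pointwise_ineq D hpos n hn0
    have h2 : ∑ n ∈ Finset.Icc 1 M,
        ∑ p ∈ n.divisorsAntidiagonal, h p.1 * (‖D.a p.2‖ * vM p.2)
        = ∑ d ∈ Finset.Icc 1 M, ∑ e ∈ Finset.Icc 1 (M / d), h d * (‖D.a e‖ * vM e) :=
      sum_rearrange M (fun d e => h d * (‖D.a e‖ * vM e))
    have h3 : ∑ d ∈ Finset.Icc 1 M, ∑ e ∈ Finset.Icc 1 (M / d), h d * (‖D.a e‖ * vM e)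
        ≤ ∑ d ∈ Finset.Icc 1 M, K * x * (h d / d) := by
      refine Finset.sum_le_sum fun d hd => ?_
      have hd1 : 1 ≤ d := (Finset.mem_Icc.1 hd).1
      have hdr : (0:ℝ) < d := by exact_mod_cast hd1
      have e1 : ∑ e ∈ Finset.Icc 1 (M / d), h d * (‖D.a e‖ * vM e)
          = h d * ∑ e ∈ Finset.Icc 1 (M / d), ‖D.a e‖ * vM e := by
        rw [Finset.mul_sum]
      rw [e1]
      have e2 : h d * ∑ e ∈ Finset.Icc 1 (M / d), ‖D.a e‖ * vM e
          ≤ h d * (K * ((M / d : ℕ) : ℝ)) :=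
        mul_le_mul_of_nonneg_left (hS (M / d)) (hhnn d)
      have e3 : ((M / d : ℕ) : ℝ) ≤ x / d := by
        calc ((M / d : ℕ) : ℝ) ≤ (M : ℝ) / d := Nat.cast_div_le
        _ ≤ x / d := by
            refine div_le_div_of_nonneg_right ?_ hdr.le
            exact Nat.floor_le hx0.le
      have e4 : h d * (K * ((M / d : ℕ) : ℝ)) ≤ h d * (K * (x / d)) := by
        refine mul_le_mul_of_nonneg_left ?_ (hhnn d)
        exact mul_le_mul_of_nonneg_left e3 hKnn
      have e5 : h d * (K * (x / d)) = K * x * (h d / d) := by ring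
      linarith
    have h4 : ∑ d ∈ Finset.Icc 1 M, K * x * (h d / d) = K * x * Sig2 := by
      rw [hSig2, Finset.mul_sum]
    linarith
  -- step 2 : Σ₁ ≤ √x Sig2 + (2 / log x) L
  have hsqrtpos : (0:ℝ) < Real.sqrt x := Real.sqrt_pos.2 hx0
  set t := ⌊Real.sqrt x⌋₊ with ht
  have hstep2 : ∑ n ∈ Finset.Icc 1 M, h n
      ≤ Real.sqrt x * Sig2 + (2 / Real.log x) * SL := by
    have hsplit : ∑ n ∈ Finset.Icc 1 M, h n
        = ∑ n ∈ (Finset.Icc 1 M).filter (fun n => n ≤ t), h n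
          + ∑ n ∈ (Finset.Icc 1 M).filter (fun n => ¬ n ≤ t), h n :=
      (Finset.sum_filter_add_sum_filter_not _ _ _).symm
    have hpart1 : ∑ n ∈ (Finset.Icc 1 M).filter (fun n => n ≤ t), h n
        ≤ Real.sqrt x * Sig2 := by
      calc ∑ n ∈ (Finset.Icc 1 M).filter (fun n => n ≤ t), h n
          ≤ ∑ n ∈ (Finset.Icc 1 M).filter (fun n => n ≤ t), Real.sqrt x * (h n / n) := by
            refine Finset.sum_le_sum fun n hn => ?_
            rw [Finset.mem_filter, Finset.mem_Icc] at hn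
            have hn1 : 1 ≤ n := hn.1.1
            have hnr : (0:ℝ) < n := by exact_mod_cast hn1
            have hns : (n:ℝ) ≤ Real.sqrt x := by
              calc (n:ℝ) ≤ (t:ℝ) := by exact_mod_cast hn.2
              _ ≤ Real.sqrt x := Nat.floor_le hsqrtpos.le
            calc h n = (n:ℝ) * (h n / n) := by field_simp
            _ ≤ Real.sqrt x * (h n / n) :=
                mul_le_mul_of_nonneg_right hns (div_nonneg (hhnn n) hnr.le)
      _ ≤ ∑ n ∈ Finset.Icc 1 M, Real.sqrt x * (h n / n) := by
            refine Finset.sum_le_sum_of_subset_of_nonneg (Finset.filter_subset _ _) ?_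
            intro n _ _
            exact mul_nonneg hsqrtpos.le (div_nonneg (hhnn n) (Nat.cast_nonneg n))
      _ = Real.sqrt x * Sig2 := by rw [hSig2, Finset.mul_sum]
    have hpart2 : ∑ n ∈ (Finset.Icc 1 M).filter (fun n => ¬ n ≤ t), h n
        ≤ (2 / Real.log x) * SL := by
      calc ∑ n ∈ (Finset.Icc 1 M).filter (fun n => ¬ n ≤ t), h n
          ≤ ∑ n ∈ (Finset.Icc 1 M).filter (fun n => ¬ n ≤ t),
              (2 / Real.log x) * (h n * Real.log n) := by
            refine Finset.sum_le_sum fun n hn => ?_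
            rw [Finset.mem_filter, Finset.mem_Icc] at hn
            have hnt : t < n := by omega
            have hsn : Real.sqrt x < (n:ℝ) := by
              calc Real.sqrt x < (t:ℝ) + 1 := Nat.lt_floor_add_one _
              _ ≤ (n:ℝ) := by exact_mod_cast hnt
            have hlogn : Real.log x / 2 ≤ Real.log n := by
              rw [← Real.log_sqrt hx0.le]
              exact Real.log_le_log hsqrtpos hsn.le
            have e1 : h n * (Real.log x / 2) ≤ h n * Real.log n :=
              mul_le_mul_of_nonneg_left hlogn (hhnn n)
            have e2 : (2 / Real.log x) * (h n * (Real.log x / 2)) = h n := by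
              field_simp
            calc h n = (2 / Real.log x) * (h n * (Real.log x / 2)) := e2.symm
            _ ≤ (2 / Real.log x) * (h n * Real.log n) := by
                refine mul_le_mul_of_nonneg_left e1 (by positivity)
      _ ≤ ∑ n ∈ Finset.Icc 1 M, (2 / Real.log x) * (h n * Real.log n) := by
            refine Finset.sum_le_sum_of_subset_of_nonneg (Finset.filter_subset _ _) ?_
            intro n hn _
            have hn1 : 1 ≤ n := (Finset.mem_Icc.1 hn).1
            have hln : (0:ℝ) ≤ Real.log n := Real.log_nonneg (by exact_mod_cast hn1)
            exact mul_nonneg (by positivity) (mul_nonneg (hhnn n) hln)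
      _ = (2 / Real.log x) * SL := by rw [hSL, Finset.mul_sum]
    linarith
  -- step 3 : conclude
  have hsqrt_bound : Real.sqrt x ≤ 2 * x / Real.log x := by
    have hlog_le : Real.log x ≤ 2 * Real.sqrt x := by
      have h1 : Real.log (Real.sqrt x) ≤ Real.sqrt x - 1 :=
        Real.log_le_sub_one_of_pos hsqrtpos
      have h2 : Real.log x = 2 * Real.log (Real.sqrt x) := by
        rw [Real.log_sqrt hx0.le]; ring
      linarith
    rw [le_div_iff₀ hlogpos]
    nlinarith [Real.mul_self_sqrt hx0.le, hsqrtpos.le]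
  have hfinal : ∑ n ∈ Finset.Icc 1 M, h n
      ≤ (2 + 2 * K) * (x / Real.log x) * Sig2 := by
    have h1 : Real.sqrt x * Sig2 ≤ (2 * x / Real.log x) * Sig2 :=
      mul_le_mul_of_nonneg_right hsqrt_bound hSig2nn
    have h2 : (2 / Real.log x) * SL ≤ (2 / Real.log x) * (K * x * Sig2) :=
      mul_le_mul_of_nonneg_left hstep1 (by positivity)
    have h3 : (2 / Real.log x) * (K * x * Sig2) = 2 * K * (x / Real.log x) * Sig2 := by
      field_simp
    have h4 : (2 * x / Real.log x) * Sig2 = 2 * (x / Real.log x) * Sig2 := by ring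
    have := hstep2
    nlinarith [hstep2, h1, h2]
  have hxlogpos : (0:ℝ) < x / Real.log x := by positivity
  have hterm2 : (0:ℝ) ≤ (2 + 2 * K) * (x / Real.log x) * Real.log (Real.log x) ^ α := by
    have : (0:ℝ) ≤ Real.log (Real.log x) ^ α := Real.rpow_nonneg (by linarith) α
    positivity
  calc ∑ n ∈ Finset.Icc 1 M, h n ≤ (2 + 2 * K) * (x / Real.log x) * Sig2 := hfinal
  _ ≤ (2 + 2 * K) * (x / Real.log x) * Real.log (Real.log x) * Sig2 := by
      have hcoef : (0:ℝ) ≤ (2 + 2 * K) * (x / Real.log x) := by positivity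
      have hdiff : (2 + 2 * K) * (x / Real.log x) * Real.log (Real.log x) * Sig2
          - (2 + 2 * K) * (x / Real.log x) * Sig2
          = (2 + 2 * K) * (x / Real.log x) * Sig2 * (Real.log (Real.log x) - 1) := by ring
      have hnn : 0 ≤ (2 + 2 * K) * (x / Real.log x) * Sig2 * (Real.log (Real.log x) - 1) :=
        mul_nonneg (mul_nonneg hcoef hSig2nn) (by linarith)
      linarith
  _ ≤ (2 + 2 * K) * (x / Real.log x) * Real.log (Real.log x) * Sig2
        + (2 + 2 * K) * (x / Real.log x) * Real.log (Real.log x) ^ α := by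
      linarith [hterm2]
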